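/- For a fixed invertible matrix a ∈ GL(r, ℝ), the determinant of the linear endomorphism of Sym(r, ℝ) given by X ↦ a X aᵀ equals (det a)^{r+1}. -/

import Mathlib

open Matrix MatrixGroups

/-- The submodule of symmetric matrices in `Matrix (Fin r) (Fin r) ℝ`. -/
def symSubmodule (r : ℕ) : Submodule ℝ (Matrix (Fin r) (Fin r) ℝ) where
  carrier := {X | X.IsSymm}
  add_mem' := by
    intro a b ha hb
    simp only [Set.mem_setOf_eq, Matrix.IsSymm] at *
    simp [Matrix.transpose_add, ha, hb]
  zero_mem' := by simp [Matrix.IsSymm]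
  smul_mem' := by
    intro c a ha
    simp only [Set.mem_setOf_eq, Matrix.IsSymm] at *
    simp [Matrix.transpose_smul, ha]

/-- The linear endomorphism `X ↦ a X aᵀ` of the space of symmetric matrices. -/
def congrMapSym (r : ℕ) (a : Matrix (Fin r) (Fin r) ℝ) :
    symSubmodule r →ₗ[ℝ] symSubmodule r where
  toFun X := ⟨a * (X : Matrix (Fin r) (Fin r) ℝ) * aᵀ, by
    have h : ((X : Matrix (Fin r) (Fin r) ℝ))ᵀ = (X : Matrix (Fin r) (Fin r) ℝ) := X.2
    show (a * (X : Matrix (Fin r) (Fin r) ℝ) * aᵀ).IsSymm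
    unfold Matrix.IsSymm
    rw [Matrix.transpose_mul, Matrix.transpose_mul, Matrix.transpose_transpose, h,
      Matrix.mul_assoc]⟩
  map_add' X Y := by
    apply Subtype.ext
    show a * ((X : Matrix (Fin r) (Fin r) ℝ) + (Y : Matrix (Fin r) (Fin r) ℝ)) * aᵀ =
      a * (X : Matrix (Fin r) (Fin r) ℝ) * aᵀ + a * (Y : Matrix (Fin r) (Fin r) ℝ) * aᵀ
    rw [Matrix.mul_add, Matrix.add_mul]
  map_smul' c X := by
    apply Subtype.ext
    show a * (c • (X : Matrix (Fin r) (Fin r) ℝ)) * aᵀ = c • (a * (X : Matrix _ _ ℝ) * aᵀ)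
    rw [Matrix.mul_smul, Matrix.smul_mul]

namespace Stmt6Aux

variable {r : ℕ}

/-- Index type for the basis of symmetric matrices: sorted pairs. -/
abbrev SIdx (r : ℕ) := {p : Fin r × Fin r // p.1 ≤ p.2}

/-- Sort a pair of indices. -/
def sortPair (i j : Fin r) : SIdx r :=
  if h : i ≤ j then ⟨(i, j), h⟩ else ⟨(j, i), le_of_not_ge h⟩

lemma sortPair_comm (i j : Fin r) : sortPair j i = sortPair i j := by
  unfold sortPair
  rcases lt_trichotomy i j with h | h | h
  · rw [dif_pos h.le, dif_neg (not_le.2 h)]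
  · subst h; simp
  · rw [dif_neg (not_le.2 h), dif_pos h.le]

lemma sortPair_of_le {i j : Fin r} (h : i ≤ j) : sortPair i j = ⟨(i, j), h⟩ := dif_pos h

/-- The coordinate linear equivalence between symmetric matrices and functions on sorted
pairs. -/
noncomputable def symEquiv (r : ℕ) : symSubmodule r ≃ₗ[ℝ] (SIdx r → ℝ) where
  toFun X p := (X : Matrix (Fin r) (Fin r) ℝ) p.1.1 p.1.2
  map_add' X Y := rfl
  map_smul' c X := rfl
  invFun f := ⟨Matrix.of fun i j => f (sortPair i j), by
    show (Matrix.of fun i j => f (sortPair i j) : Matrix (Fin r) (Fin r) ℝ).IsSymm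
    ext i j
    simp [Matrix.IsSymm, sortPair_comm]⟩
  left_inv X := by
    apply Subtype.ext
    ext i j
    show (X : Matrix (Fin r) (Fin r) ℝ) (sortPair i j).1.1 (sortPair i j).1.2
      = (X : Matrix (Fin r) (Fin r) ℝ) i j
    by_cases h : i ≤ j
    · rw [sortPair_of_le h]
    · unfold sortPair
      rw [dif_neg h]
      have hs : ((X : Matrix (Fin r) (Fin r) ℝ))ᵀ = (X : Matrix (Fin r) (Fin r) ℝ) := X.2
      conv_rhs => rw [← hs]
      rfl
  right_inv f := by
    funext p
    show f (sortPair p.1.1 p.1.2) = f p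
    rw [sortPair_of_le p.2]

lemma symEquiv_symm_apply (f : SIdx r → ℝ) (i j : Fin r) :
    ((symEquiv r).symm f : Matrix (Fin r) (Fin r) ℝ) i j = f (sortPair i j) := rfl

lemma symEquiv_apply (X : symSubmodule r) (p : SIdx r) :
    symEquiv r X p = (X : Matrix (Fin r) (Fin r) ℝ) p.1.1 p.1.2 := rfl

/-- Basis of the symmetric matrices indexed by sorted pairs. -/
noncomputable def symBasis (r : ℕ) : Module.Basis (SIdx r) ℝ (symSubmodule r) :=
  Module.Basis.ofEquivFun (symEquiv r)

/-- The matrix of `congrMapSym r a` in the basis `symBasis r`. -/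
noncomputable def N (a : Matrix (Fin r) (Fin r) ℝ) : Matrix (SIdx r) (SIdx r) ℝ :=
  LinearMap.toMatrix (symBasis r) (symBasis r) (congrMapSym r a)

lemma det_congrMapSym_eq (a : Matrix (Fin r) (Fin r) ℝ) :
    LinearMap.det (congrMapSym r a) = (N a).det :=
  (LinearMap.det_toMatrix _ _).symm

lemma congrMapSym_mul (a b : Matrix (Fin r) (Fin r) ℝ) :
    congrMapSym r (a * b) = (congrMapSym r a).comp (congrMapSym r b) := by
  apply LinearMap.ext
  intro X
  apply Subtype.ext
  show (a * b) * (X : Matrix (Fin r) (Fin r) ℝ) * (a * b)ᵀ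
      = a * (b * (X : Matrix (Fin r) (Fin r) ℝ) * bᵀ) * aᵀ
  rw [Matrix.transpose_mul]
  simp only [Matrix.mul_assoc]

lemma N_mul (a b : Matrix (Fin r) (Fin r) ℝ) : N (a * b) = N a * N b := by
  rw [N, congrMapSym_mul, LinearMap.toMatrix_comp (symBasis r) (symBasis r) (symBasis r)]
  rfl

end Stmt6Aux
namespace Stmt6Aux

variable {r : ℕ}

lemma N_apply' (a : Matrix (Fin r) (Fin r) ℝ) (p q : SIdx r) :
    N a p q = (a * ((symEquiv r).symm (Function.update (0 : SIdx r → ℝ) q 1) :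
      Matrix (Fin r) (Fin r) ℝ) * aᵀ) p.1.1 p.1.2 := by
  rw [N, LinearMap.toMatrix_apply]
  rw [symBasis, Module.Basis.ofEquivFun_repr_apply, Module.Basis.coe_ofEquivFun]
  rfl

lemma mul_std_mul (a : Matrix (Fin r) (Fin r) ℝ) (k l m n : Fin r) :
    (a * Matrix.single k l (1 : ℝ) * aᵀ) m n = a m k * a n l := by
  rw [Matrix.mul_assoc, Matrix.mul_apply]
  have : ∀ x, (Matrix.single k l (1 : ℝ) * aᵀ) x n = if x = k then a n l else 0 := by
    intro x
    simp [Matrix.mul_apply, Matrix.single, ite_and, eq_comm]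
  simp only [this, mul_ite, mul_zero]
  simp

lemma Bq_eq_diag {q : SIdx r} (h : q.1.1 = q.1.2) :
    ((symEquiv r).symm (Function.update (0 : SIdx r → ℝ) q 1) : Matrix (Fin r) (Fin r) ℝ)
      = Matrix.single q.1.1 q.1.2 (1 : ℝ) := by
  obtain ⟨⟨q1, q2⟩, hq⟩ := q
  simp only at h hq
  ext i j
  rw [symEquiv_symm_apply, Function.update_apply]
  simp only [Pi.zero_apply, Matrix.single, Matrix.of_apply]
  unfold sortPair
  by_cases hij : i ≤ j
  · simp only [dif_pos hij, Subtype.mk.injEq, Prod.mk.injEq]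
    split_ifs <;> first | (exfalso; omega) | norm_num
  · simp only [dif_neg hij, Subtype.mk.injEq, Prod.mk.injEq]
    split_ifs <;> first | (exfalso; omega) | norm_num

lemma Bq_eq_offdiag {q : SIdx r} (h : q.1.1 ≠ q.1.2) :
    ((symEquiv r).symm (Function.update (0 : SIdx r → ℝ) q 1) : Matrix (Fin r) (Fin r) ℝ)
      = Matrix.single q.1.1 q.1.2 (1 : ℝ) + Matrix.single q.1.2 q.1.1 (1 : ℝ) := by
  obtain ⟨⟨q1, q2⟩, hq⟩ := q
  simp only at h hq
  ext i j
  rw [symEquiv_symm_apply, Function.update_apply]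
  simp only [Pi.zero_apply, Matrix.add_apply, Matrix.single, Matrix.of_apply]
  unfold sortPair
  by_cases hij : i ≤ j
  · simp only [dif_pos hij, Subtype.mk.injEq, Prod.mk.injEq]
    split_ifs <;> first | (exfalso; omega) | norm_num
  · simp only [dif_neg hij, Subtype.mk.injEq, Prod.mk.injEq]
    split_ifs <;> first | (exfalso; omega) | norm_num

lemma N_apply_diag (a : Matrix (Fin r) (Fin r) ℝ) (p q : SIdx r) (h : q.1.1 = q.1.2) :
    N a p q = a p.1.1 q.1.1 * a p.1.2 q.1.1 := by
  rw [N_apply', Bq_eq_diag h, mul_std_mul, ← h]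

lemma N_apply_offdiag (a : Matrix (Fin r) (Fin r) ℝ) (p q : SIdx r) (h : q.1.1 ≠ q.1.2) :
    N a p q = a p.1.1 q.1.1 * a p.1.2 q.1.2 + a p.1.1 q.1.2 * a p.1.2 q.1.1 := by
  rw [N_apply', Bq_eq_offdiag h, Matrix.mul_add, Matrix.add_mul, Matrix.add_apply,
    mul_std_mul, mul_std_mul]

end Stmt6Aux
namespace Stmt6Aux

variable {r : ℕ}

lemma N_diagonal (d : Fin r → ℝ) :
    N (Matrix.diagonal d) = Matrix.diagonal (fun p : SIdx r => d p.1.1 * d p.1.2) := by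
  ext p q
  obtain ⟨⟨p1, p2⟩, hp⟩ := p
  obtain ⟨⟨q1, q2⟩, hq⟩ := q
  simp only at hp hq
  by_cases h : q1 = q2
  · rw [N_apply_diag _ _ _ (show ((⟨(q1, q2), hq⟩ : SIdx r)).1.1 = _ from h)]
    simp only [Matrix.diagonal_apply, Subtype.mk.injEq, Prod.mk.injEq]
    split_ifs <;> first | (exfalso; omega) | simp
  · rw [N_apply_offdiag _ _ _ (show ((⟨(q1, q2), hq⟩ : SIdx r)).1.1 ≠ _ from h)]
    simp only [Matrix.diagonal_apply, Subtype.mk.injEq, Prod.mk.injEq]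
    split_ifs <;> first | (exfalso; omega) | simp

lemma prod_pairs (d : Fin r → ℝ) :
    (∏ p : SIdx r, d p.1.1 * d p.1.2) = (∏ i, d i) ^ (r + 1) := by
  classical
  rw [Finset.prod_mul_distrib]
  have key : ∀ f : Fin r × Fin r → ℝ,
      (∏ p : SIdx r, f p.1) = ∏ x : Fin r × Fin r, if x.1 ≤ x.2 then f x else 1 := by
    intro f
    rw [← Finset.prod_filter]
    exact (Finset.prod_subtype _ (by simp) f).symm
  have h1 : ∀ i : Fin r, (∏ j : Fin r, if i ≤ j then d i else 1) = d i ^ (r - i.val) := by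
    intro i
    rw [← Finset.prod_filter, Finset.prod_const]
    congr 1
    rw [show Finset.univ.filter (fun j => i ≤ j) = Finset.Ici i from by ext x; simp,
      Fin.card_Ici]
  have h2 : ∀ j : Fin r, (∏ i : Fin r, if i ≤ j then d j else 1) = d j ^ (j.val + 1) := by
    intro j
    rw [← Finset.prod_filter, Finset.prod_const]
    congr 1
    rw [show Finset.univ.filter (fun i => i ≤ j) = Finset.Iic j from by ext x; simp,
      Fin.card_Iic]
  have A1 : (∏ p : SIdx r, d p.1.1) = ∏ i : Fin r, d i ^ (r - i.val) := by
    rw [key (fun x => d x.1), Fintype.prod_prod_type]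
    exact Finset.prod_congr rfl fun i _ => h1 i
  have A2 : (∏ p : SIdx r, d p.1.2) = ∏ j : Fin r, d j ^ (j.val + 1) := by
    rw [key (fun x => d x.2), Fintype.prod_prod_type, Finset.prod_comm]
    exact Finset.prod_congr rfl fun j _ => h2 j
  rw [A1, A2, ← Finset.prod_mul_distrib, ← Finset.prod_pow]
  apply Finset.prod_congr rfl
  intro i _
  rw [← pow_add]
  congr 1
  have := i.isLt
  omega

section Transvec

variable (i j : Fin r) (hij : i ≠ j) (c : ℝ)

lemma tau_ne {a b : Fin r} (h : Matrix.transvection i j c a b ≠ 0) :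
    a = b ∨ (i = a ∧ j = b) := by
  by_cases h1 : a = b
  · exact Or.inl h1
  · by_cases h2 : i = a ∧ j = b
    · exact Or.inr h2
    · exfalso
      apply h
      simp [Matrix.transvection, Matrix.single, Matrix.one_apply, h1, h2]

lemma tau_diag (hij : i ≠ j) (a : Fin r) : Matrix.transvection i j c a a = 1 := by
  have h2 : ¬(i = a ∧ j = a) := fun ⟨u, v⟩ => hij (u.trans v.symm)
  simp [Matrix.transvection, Matrix.single, Matrix.one_apply, h2]

/-- The number of components of the sorted pair equal to `i`. -/
def cnt (i : Fin r) (p : SIdx r) : ℕ :=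
  (if p.1.1 = i then 1 else 0) + (if p.1.2 = i then 1 else 0)

lemma N_transvection_zero (p q : SIdx r) (hne : p ≠ q) (hcnt : cnt i p ≤ cnt i q) :
    N (Matrix.transvection i j c) p q = 0 := by
  obtain ⟨⟨p1, p2⟩, hp⟩ := p
  obtain ⟨⟨q1, q2⟩, hq⟩ := q
  simp only at hp hq
  unfold cnt at hcnt
  simp only at hcnt
  have hne' : ¬(p1 = q1 ∧ p2 = q2) := by
    rintro ⟨rfl, rfl⟩
    exact hne rfl
  by_cases hq12 : q1 = q2
  · rw [N_apply_diag _ _ _ (show ((⟨(q1, q2), hq⟩ : SIdx r)).1.1 = _ from hq12)]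
    simp only
    by_contra hNZ
    obtain ⟨h1, h2⟩ := mul_ne_zero_iff.1 hNZ
    rcases tau_ne i j c h1 with ha | ⟨ha1, ha2⟩ <;>
      rcases tau_ne i j c h2 with hb | ⟨hb1, hb2⟩ <;>
      (split_ifs at hcnt <;> omega)
  · rw [N_apply_offdiag _ _ _ (show ((⟨(q1, q2), hq⟩ : SIdx r)).1.1 ≠ _ from hq12)]
    simp only
    have e1 : Matrix.transvection i j c p1 q1 * Matrix.transvection i j c p2 q2 = 0 := by
      by_contra hNZ
      obtain ⟨h1, h2⟩ := mul_ne_zero_iff.1 hNZ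
      rcases tau_ne i j c h1 with ha | ⟨ha1, ha2⟩ <;>
        rcases tau_ne i j c h2 with hb | ⟨hb1, hb2⟩ <;>
        (split_ifs at hcnt <;> omega)
    have e2 : Matrix.transvection i j c p1 q2 * Matrix.transvection i j c p2 q1 = 0 := by
      by_contra hNZ
      obtain ⟨h1, h2⟩ := mul_ne_zero_iff.1 hNZ
      rcases tau_ne i j c h1 with ha | ⟨ha1, ha2⟩ <;>
        rcases tau_ne i j c h2 with hb | ⟨hb1, hb2⟩ <;>
        (split_ifs at hcnt <;> omega)
    rw [e1, e2, add_zero]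

lemma N_transvection_diag (hij : i ≠ j) (p : SIdx r) : N (Matrix.transvection i j c) p p = 1 := by
  obtain ⟨⟨p1, p2⟩, hp⟩ := p
  simp only at hp
  by_cases h12 : p1 = p2
  · rw [N_apply_diag _ _ _ (show ((⟨(p1, p2), hp⟩ : SIdx r)).1.1 = _ from h12)]
    simp only
    subst h12
    rw [tau_diag i j c hij, one_mul]
  · rw [N_apply_offdiag _ _ _ (show ((⟨(p1, p2), hp⟩ : SIdx r)).1.1 ≠ _ from h12)]
    simp only
    rw [tau_diag i j c hij, tau_diag i j c hij, one_mul]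
    have e2 : Matrix.transvection i j c p1 p2 * Matrix.transvection i j c p2 p1 = 0 := by
      by_contra hNZ
      obtain ⟨h1, h2⟩ := mul_ne_zero_iff.1 hNZ
      rcases tau_ne i j c h1 with ha | ⟨ha1, ha2⟩
      · exact h12 ha
      rcases tau_ne i j c h2 with hb | ⟨hb1, hb2⟩
      · exact h12 hb.symm
      exact hij (ha1.trans hb2.symm)
    rw [e2, add_zero]

lemma det_N_transvection (hij : i ≠ j) : (N (Matrix.transvection i j c)).det = 1 := by
  have hbt : (N (Matrix.transvection i j c)).BlockTriangular
      (fun p => -(cnt i p : ℤ)) := by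
    intro p q hlt
    apply N_transvection_zero i j c
    · rintro rfl
      exact lt_irrefl _ hlt
    · simp only [neg_lt_neg_iff, Int.ofNat_lt] at hlt
      omega
  rw [hbt.det]
  apply Finset.prod_eq_one
  intro a _
  have hblock : (N (Matrix.transvection i j c)).toSquareBlock
      (fun p => -(cnt i p : ℤ)) a = 1 := by
    ext p' q'
    by_cases h : p' = q'
    · subst h
      rw [Matrix.toSquareBlock_def]
      show N (Matrix.transvection i j c) p'.1 p'.1 = _
      rw [N_transvection_diag i j c hij, Matrix.one_apply_eq]
    · rw [Matrix.toSquareBlock_def]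
      show N (Matrix.transvection i j c) p'.1 q'.1 = _
      rw [Matrix.one_apply_ne h]
      apply N_transvection_zero i j c
      · exact fun hc => h (Subtype.ext hc)
      · have h1 : -(cnt i p'.1 : ℤ) = a := p'.2
        have h2 : -(cnt i q'.1 : ℤ) = a := q'.2
        omega
  rw [hblock, Matrix.det_one]

end Transvec

end Stmt6Aux

open Stmt6Aux in
theorem stmt6 (r : ℕ) (a : GL (Fin r) ℝ) :
    LinearMap.det (congrMapSym r (a : Matrix (Fin r) (Fin r) ℝ)) =
      ((a : Matrix (Fin r) (Fin r) ℝ).det) ^ (r + 1) := by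
  have hdet : (a : Matrix (Fin r) (Fin r) ℝ).det ≠ 0 := by
    have h := (Matrix.isUnit_iff_isUnit_det (a : Matrix (Fin r) (Fin r) ℝ)).mp a.isUnit
    exact h.ne_zero
  rw [det_congrMapSym_eq]
  exact Matrix.diagonal_transvection_induction_of_det_ne_zero
    (fun M => (N M).det = M.det ^ (r + 1)) _ hdet
    (fun D _ => by
      show (N (Matrix.diagonal D)).det = (Matrix.diagonal D).det ^ (r + 1)
      rw [N_diagonal, Matrix.det_diagonal, Matrix.det_diagonal, prod_pairs])
    (fun t => by
      show (N t.toMatrix).det = t.toMatrix.det ^ (r + 1)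
      obtain ⟨ti, tj, htij, tc⟩ := t
      rw [Matrix.TransvectionStruct.toMatrix_mk, det_N_transvection ti tj tc htij,
        Matrix.det_transvection_of_ne _ _ htij, one_pow])
    (fun A B _ _ hA hB => by
      show (N (A * B)).det = (A * B).det ^ (r + 1)
      try simp only at hA hB
      rw [N_mul, Matrix.det_mul, hA, hB, Matrix.det_mul, mul_pow])
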